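/- Under the assumption that a proper ERS loop γ satisfies ⟨γ, A⟩ = 1 for every arrow A of G (so γ traverses every arrow positively and exactly half of the edges — the 'red' ones), define λ(e) = Σ_A ⟨[A], e⟩ for any edge e. Then λ(e) depends only on whether e is red (traversed by γ) or blue (not traversed), and λ(blue) = λ(red) − 1 = ↗(σ_γ). -/

import Mathlib

open Finsupp

instance twoMulNeZero (n : ℕ) [NeZero n] : NeZero (2 * n) :=
  ⟨by have := NeZero.ne n; omega⟩

/-- A classical Gauss diagram of degree `n`: an oriented circle with `2n`
marked points (identified with `ZMod (2n)`), and `n` oriented chords (arrows)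
given by injective tail/head maps whose ranges partition the marked points.
Edge `e` is the arc of the circle from marked point `e` to `e + 1`. -/
structure GaussDiagram (n : ℕ) [NeZero n] where
  tail : Fin n → ZMod (2 * n)
  head : Fin n → ZMod (2 * n)
  inj : Function.Injective (Sum.elim tail head : Fin n ⊕ Fin n → ZMod (2 * n))
  cover : ∀ v : ZMod (2 * n), (∃ j, tail j = v) ∨ (∃ j, head j = v)

variable {n : ℕ} [NeZero n]

/-- Edge `e` (from vertex `e` to `e + 1`) lies on the cyclic arc running from
vertex `h` to vertex `t` along the circle's orientation. -/
def inArc (h t e : ZMod (2 * n)) : Prop := (e - h).val < (t - h).val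

instance (h t e : ZMod (2 * n)) : Decidable (inArc h t e) := by
  unfold inArc; infer_instance

/-- The simplicial boundary map of the 1-complex underlying a Gauss diagram:
1-cells are the `2n` circle edges and the `n` arrows. -/
noncomputable def bdry (D : GaussDiagram n) :
    ((ZMod (2 * n) ⊕ Fin n) →₀ ℤ) →ₗ[ℤ] (ZMod (2 * n) →₀ ℤ) :=
  Finsupp.lsum ℤ fun c =>
    match c with
    | Sum.inl e => Finsupp.lsingle (e + 1) - Finsupp.lsingle e
    | Sum.inr j => Finsupp.lsingle (D.head j) - Finsupp.lsingle (D.tail j)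

/-- The class `[K]` of the base circle: the sum of all circle edges. -/
noncomputable def circleK : (ZMod (2 * n) ⊕ Fin n) →₀ ℤ :=
  ∑ e : ZMod (2 * n), Finsupp.single (Sum.inl e) 1

/-- The fundamental loop `[A_j]` of arrow `j`: the arrow followed by the arc of
the circle from its head back to its tail, along the circle's orientation. -/
noncomputable def loopA (D : GaussDiagram n) (j : Fin n) :
    (ZMod (2 * n) ⊕ Fin n) →₀ ℤ :=
  Finsupp.single (Sum.inr j) 1 +
    ∑ e : ZMod (2 * n),
      (if inArc (D.head j) (D.tail j) e then (1 : ℤ) else 0) •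
        Finsupp.single (Sum.inl e) 1

/-- The family of `n + 1` fundamental loops: the base circle and one loop per
arrow. -/
noncomputable def fundLoop (D : GaussDiagram n) :
    Option (Fin n) → ((ZMod (2 * n) ⊕ Fin n) →₀ ℤ)
  | none => circleK
  | Option.some j => loopA D j

/-- `λ(e) = Σ_A ⟨[A], e⟩`: the number of fundamental loops of arrows passing
through the edge `e`. -/
def lam (D : GaussDiagram n) (e : ZMod (2 * n)) : ℤ :=
  ∑ j : Fin n, if inArc (D.head j) (D.tail j) e then 1 else 0

/-- The red edge following the red edge `e` along the loop `γ` (the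
permutation `σ_γ`). -/
noncomputable def nextEdge (D : GaussDiagram n)
    (γ : (ZMod (2 * n) ⊕ Fin n) →₀ ℤ) (e : ZMod (2 * n)) : ZMod (2 * n) :=
  if h : ∃ j, D.tail j = e + 1 ∧ γ (Sum.inr j) = 1 then D.head h.choose
  else if h' : ∃ j, D.head j = e + 1 ∧ γ (Sum.inr j) = -1 then D.tail h'.choose
  else e + 1


section Helpers

lemma val_sub'' {N : ℕ} [NeZero N] (a b : ZMod N) :
    (a - b).val = if b.val ≤ a.val then a.val - b.val else a.val + N - b.val := by
  have hb : b.val ≤ N := (ZMod.val_lt b).le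
  have ha : a.val < N := ZMod.val_lt a
  have key : a - b = ((a.val + (N - b.val) : ℕ) : ZMod N) := by
    push_cast [Nat.cast_sub hb]
    simp [ZMod.natCast_val, ZMod.natCast_self, ZMod.cast_id, sub_eq_add_neg]
  rw [key, ZMod.val_natCast]
  rcases le_or_gt b.val a.val with h | h
  · rw [if_pos h]
    have : a.val + (N - b.val) = (a.val - b.val) + N := by omega
    rw [this, Nat.add_mod_right, Nat.mod_eq_of_lt (by omega)]
  · rw [if_neg (by omega)]
    rw [Nat.mod_eq_of_lt (by omega)]
    omega

lemma val_one'' {N : ℕ} [NeZero N] (hN : 1 < N) : (1 : ZMod N).val = 1 := by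
  rw [← Nat.cast_one, ZMod.val_natCast, Nat.mod_eq_of_lt hN]

lemma val_sub_one' {N : ℕ} [NeZero N] (hN : 1 < N) (a : ZMod N) :
    (a - 1).val = if a = 0 then N - 1 else a.val - 1 := by
  have h1 : (1 : ZMod N).val = 1 := val_one'' hN
  rcases eq_or_ne a 0 with rfl | h0
  · rw [val_sub'', h1, if_pos rfl, ZMod.val_zero, if_neg (by omega)]; omega
  · have hv : a.val ≠ 0 := fun h => h0 ((ZMod.val_eq_zero _).mp h)
    rw [val_sub'', h1, if_neg h0, if_pos (by omega)]

lemma val_inj' {N : ℕ} [NeZero N] {a b : ZMod N} (h : a.val = b.val) : a = b :=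
  ZMod.val_injective N h

lemma sum_indicator {k : ℕ} {α : Type*} [DecidableEq α] {f : Fin k → α}
    (hf : Function.Injective f) (v : α) [Decidable (∃ j, f j = v)] :
    (∑ j : Fin k, if f j = v then (1 : ℤ) else 0) = if ∃ j, f j = v then 1 else 0 := by
  by_cases h : ∃ j, f j = v
  · obtain ⟨j0, hj0⟩ := h
    rw [if_pos ⟨j0, hj0⟩, Finset.sum_eq_single j0]
    · rw [if_pos hj0]
    · intro j _ hj
      rw [if_neg fun hfj => hj (hf (hfj.trans hj0.symm))]
    · simp
  · rw [if_neg h]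
    apply Finset.sum_eq_zero
    intro j _
    rw [if_neg fun hfj => h ⟨j, hfj⟩]

end Helpers

lemma hN2 (n : ℕ) [NeZero n] : 1 < 2 * n := by have := NeZero.ne n; omega

lemma inArc_step {n : ℕ} [NeZero n] (h t e : ZMod (2*n)) (hht : h ≠ t) :
    ((if inArc h t e then (1:ℤ) else 0) - if inArc h t (e-1) then 1 else 0)
    = (if h = e then 1 else 0) - if t = e then 1 else 0 := by
  have hN : 1 < 2*n := hN2 n
  have hd0 : (t - h).val ≠ 0 := fun h0 =>
    hht (by have := (ZMod.val_eq_zero _).mp h0; rw [sub_eq_zero] at this; exact this.symm)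
  have key : (e - 1 - h) = (e - h) - 1 := by ring
  have heh : (h = e) ↔ (e - h).val = 0 := by
    rw [ZMod.val_eq_zero, sub_eq_zero]; exact eq_comm
  have het : (t = e) ↔ (e - h).val = (t - h).val := by
    constructor
    · rintro rfl; rfl
    · intro hv; have := val_inj' hv; rw [sub_left_inj] at this; exact this.symm
  have hy : ((e - h).val = 0 ∧ (e - 1 - h).val = 2*n - 1) ∨
      ((e - h).val ≠ 0 ∧ (e - 1 - h).val = (e - h).val - 1) := by
    rcases eq_or_ne (e - h) 0 with h0 | h0
    · exact Or.inl ⟨by rw [h0, ZMod.val_zero], by rw [key, val_sub_one' hN, if_pos h0]⟩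
    · exact Or.inr ⟨fun hv => h0 ((ZMod.val_eq_zero _).mp hv),
        by rw [key, val_sub_one' hN, if_neg h0]⟩
  have h1 := ZMod.val_lt (e - h)
  have h2 := ZMod.val_lt (t - h)
  have h3 := ZMod.val_lt (e - 1 - h)
  simp only [inArc, heh, het]
  split_ifs <;> omega

lemma card_inArc {n : ℕ} [NeZero n] (h t : ZMod (2*n)) :
    (∑ e : ZMod (2*n), if inArc h t e then (1:ℤ) else 0) = ((t - h).val : ℤ) := by
  rw [Finset.sum_boole]
  congr 1
  have : (t - h).val = (Finset.range ((t-h).val)).card := by rw [Finset.card_range]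
  rw [this]
  apply Finset.card_bij' (fun e _ => (e - h).val) (fun x _ => h + (x : ZMod (2*n)))
  · intro e he
    simp only [Finset.mem_filter, Finset.mem_univ, true_and] at he
    simpa [Finset.mem_range, inArc] using he
  · intro x hx
    simp only [Finset.mem_range] at hx
    have hxN : x < 2*n := lt_trans hx (ZMod.val_lt _)
    simp only [Finset.mem_filter, Finset.mem_univ, true_and, inArc, add_sub_cancel_left,
      ZMod.val_natCast, Nat.mod_eq_of_lt hxN]
    exact Finset.mem_filter.mpr ⟨Finset.mem_univ _, by
      show ((h + (x : ZMod (2*n))) - h).val < (t - h).val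
      rw [add_sub_cancel_left, ZMod.val_natCast, Nat.mod_eq_of_lt hxN]; exact hx⟩
  · intro e _
    simp [ZMod.natCast_val, ZMod.cast_id]
  · intro x hx
    simp only [Finset.mem_range] at hx
    have hxN : x < 2*n := lt_trans hx (ZMod.val_lt _)
    simp [ZMod.val_natCast, Nat.mod_eq_of_lt hxN]

lemma val_sub_split {n : ℕ} [NeZero n] (h t : ZMod (2*n)) (hne : h ≠ t) :
    ((t - h).val : ℤ) = 1 + ((t-1).val : ℤ) - (h.val : ℤ)
      + (if (t-1).val < h.val then (2*n : ℤ) else 0) := by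
  have hN : 1 < 2*n := hN2 n
  have h1 := val_sub'' t h
  have h3 := val_sub_one' hN t
  have hvne : t.val ≠ h.val := fun hv => hne (val_inj' hv).symm
  have ht0 : (t = 0) ↔ t.val = 0 := (ZMod.val_eq_zero _).symm
  simp only [ht0] at h3
  have l1 := ZMod.val_lt t
  have l2 := ZMod.val_lt h
  have l3 := ZMod.val_lt (t - 1)
  rw [h1, h3]
  split_ifs <;> omega

lemma bdry_apply {n : ℕ} [NeZero n] (D : GaussDiagram n)
    (γ : (ZMod (2 * n) ⊕ Fin n) →₀ ℤ) (v : ZMod (2 * n)) :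
    (bdry D γ) v = γ (Sum.inl (v - 1)) - γ (Sum.inl v)
      + ((∑ j : Fin n, if D.head j = v then γ (Sum.inr j) else 0)
        - ∑ j : Fin n, if D.tail j = v then γ (Sum.inr j) else 0) := by
  rw [bdry, Finsupp.lsum_apply]
  rw [Finsupp.sum_fintype]
  · rw [Finsupp.finset_sum_apply, Fintype.sum_sum_type]
    simp only [LinearMap.sub_apply, Finsupp.lsingle_apply, Finsupp.sub_apply,
      Finsupp.single_apply, Finset.sum_sub_distrib]
    congr 1
    · congr 1
      · rw [show γ (Sum.inl (v-1)) = if v - 1 ∈ Finset.univ then γ (Sum.inl (v-1)) else 0 by simp,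
          ← Finset.sum_ite_eq' Finset.univ (v-1) (fun e => γ (Sum.inl e))]
        apply Finset.sum_congr rfl
        intro e _
        congr 1
        exact propext eq_sub_iff_add_eq.symm
      · rw [show γ (Sum.inl v) = if v ∈ Finset.univ then γ (Sum.inl v) else 0 by simp,
          ← Finset.sum_ite_eq' Finset.univ v (fun e => γ (Sum.inl e))]
  · intro i; cases i <;> simp

/-- Key lemma: if the ERS loop `γ` traverses every arrow positively
(`⟨γ,A⟩ = 1` for all `A`), then `λ(e)` only depends on the colour of `e`
(red = traversed by `γ`, blue = not), and
`λ(blue) = λ(red) − 1 = ↗(σ_γ)`. -/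
theorem lam_eq_up (n : ℕ) [NeZero n] (D : GaussDiagram n)
    (γ : (ZMod (2 * n) ⊕ Fin n) →₀ ℤ) (hγ : γ ∈ LinearMap.ker (bdry D))
    (harrow : ∀ j : Fin n, γ (Sum.inr j) = 1)
    (hedge : ∀ e : ZMod (2 * n), γ (Sum.inl e) = 0 ∨ γ (Sum.inl e) = 1) :
    (∀ e : ZMod (2 * n), γ (Sum.inl e) = 1 →
      lam D e = ({e' : ZMod (2 * n) |
        γ (Sum.inl e') = 1 ∧ e'.val < (nextEdge D γ e').val}.ncard : ℤ) + 1) ∧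
    (∀ e : ZMod (2 * n), γ (Sum.inl e) = 0 →
      lam D e = ({e' : ZMod (2 * n) |
        γ (Sum.inl e') = 1 ∧ e'.val < (nextEdge D γ e').val}.ncard : ℤ)) := by
  have htinj : Function.Injective D.tail := fun a b hab => by
    have := D.inj (a₁ := Sum.inl a) (a₂ := Sum.inl b) (by simpa using hab)
    simpa using this
  have hhinj : Function.Injective D.head := fun a b hab => by
    have := D.inj (a₁ := Sum.inr a) (a₂ := Sum.inr b) (by simpa using hab)
    simpa using this
  have hth : ∀ j k, D.head j ≠ D.tail k := fun j k hh => by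
    have := D.inj (a₁ := Sum.inr j) (a₂ := Sum.inl k) (by simpa using hh)
    simp at this
  have hγ0 : bdry D γ = 0 := LinearMap.mem_ker.mp hγ
  have relA : ∀ v : ZMod (2*n), γ (Sum.inl (v-1)) - γ (Sum.inl v)
      + ((if ∃ j, D.head j = v then (1:ℤ) else 0)
        - (if ∃ j, D.tail j = v then (1:ℤ) else 0)) = 0 := by
    intro v
    have h0 : (bdry D γ) v = 0 := by rw [hγ0]; rfl
    rw [bdry_apply,
      show (∑ j : Fin n, if D.head j = v then γ (Sum.inr j) else 0)
          = ∑ j : Fin n, if D.head j = v then (1:ℤ) else 0 from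
        Finset.sum_congr rfl fun j _ => by rw [harrow j],
      show (∑ j : Fin n, if D.tail j = v then γ (Sum.inr j) else 0)
          = ∑ j : Fin n, if D.tail j = v then (1:ℤ) else 0 from
        Finset.sum_congr rfl fun j _ => by rw [harrow j],
      sum_indicator hhinj v, sum_indicator htinj v] at h0
    exact h0
  have notboth : ∀ v : ZMod (2*n), ¬((∃ j, D.head j = v) ∧ (∃ j, D.tail j = v)) := by
    rintro v ⟨⟨j, hj⟩, ⟨k, hk⟩⟩
    exact hth j k (hj.trans hk.symm)
  have red_iff : ∀ e : ZMod (2*n), γ (Sum.inl e) = 1 ↔ ∃ j, D.head j = e := by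
    intro e
    constructor
    · intro h1
      rcases D.cover e with ⟨j, hj⟩ | hh
      · exfalso
        have hT : ∃ k, D.tail k = e := ⟨j, hj⟩
        have hH : ¬ ∃ k, D.head k = e := fun hH => notboth e ⟨hH, hT⟩
        have := relA e
        rw [if_pos hT, if_neg hH, h1] at this
        rcases hedge (e - 1) with h | h <;> omega
      · exact hh
    · intro hH
      have hT : ¬ ∃ k, D.tail k = e := fun hT => notboth e ⟨hH, hT⟩
      have := relA e
      rw [if_pos hH, if_neg hT] at this
      rcases hedge (e - 1) with h | h <;> rcases hedge e with h' | h' <;> omega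
  have red_iff' : ∀ e : ZMod (2*n), γ (Sum.inl e) = 1 ↔ ∃ j, D.tail j = e + 1 := by
    intro e
    have hrel := relA (e + 1)
    rw [add_sub_cancel_right] at hrel
    constructor
    · intro h1
      by_contra hT
      have hH : ∃ k, D.head k = e + 1 := (D.cover (e+1)).resolve_left hT
      rw [if_pos hH, if_neg hT, h1] at hrel
      rcases hedge (e + 1) with h | h <;> omega
    · intro hT
      have hH : ¬ ∃ k, D.head k = e + 1 := fun hH => notboth _ ⟨hH, hT⟩
      rw [if_pos hT, if_neg hH] at hrel
      rcases hedge (e + 1) with h | h <;> rcases hedge e with h' | h' <;> omega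
  have hnext : ∀ (e : ZMod (2*n)) (j : Fin n), D.tail j = e + 1 →
      nextEdge D γ e = D.head j := by
    intro e j hj
    have hex : ∃ k, D.tail k = e + 1 ∧ γ (Sum.inr k) = 1 := ⟨j, hj, harrow j⟩
    unfold nextEdge
    rw [dif_pos hex]
    exact congrArg D.head (htinj (hex.choose_spec.1.trans hj.symm))
  have lamstep : ∀ e : ZMod (2*n), lam D e - lam D (e - 1)
      = ((if ∃ j, D.head j = e then (1:ℤ) else 0)
        - (if ∃ j, D.tail j = e then (1:ℤ) else 0)) := by
    intro e
    rw [lam, lam, ← Finset.sum_sub_distrib,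
      Finset.sum_congr rfl fun j _ => inArc_step (D.head j) (D.tail j) e (hth j j),
      Finset.sum_sub_distrib, sum_indicator hhinj e, sum_indicator htinj e]
  have step' : ∀ e : ZMod (2*n), lam D e - γ (Sum.inl e)
      = lam D (e-1) - γ (Sum.inl (e-1)) := by
    intro e
    have h1 := relA e
    have h2 := lamstep e
    linarith
  have const : ∀ e : ZMod (2*n), lam D e - γ (Sum.inl e)
      = lam D 0 - γ (Sum.inl 0) := by
    have key : ∀ k : ℕ, lam D ((k : ℕ) : ZMod (2*n)) - γ (Sum.inl ((k : ℕ) : ZMod (2*n)))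
        = lam D 0 - γ (Sum.inl 0) := by
      intro k
      induction k with
      | zero => norm_num
      | succ k ih =>
        have hc : (((k+1 : ℕ)) : ZMod (2*n)) = ((k : ℕ) : ZMod (2*n)) + 1 := by push_cast; ring
        rw [hc]
        have hstep := step' (((k : ℕ) : ZMod (2*n)) + 1)
        rw [add_sub_cancel_right] at hstep
        rw [hstep]
        exact ih
    intro e
    have he : ((e.val : ℕ) : ZMod (2*n)) = e := by
      simp [ZMod.natCast_val, ZMod.cast_id]
    rw [← he]
    exact key e.val
  have hgam : ∀ e : ZMod (2*n), γ (Sum.inl e) = if ∃ j, D.head j = e then (1:ℤ) else 0 := by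
    intro e
    rcases hedge e with h | h
    · rw [h, if_neg fun hH => by have := (red_iff e).mpr hH; omega]
    · rw [h, if_pos ((red_iff e).mp h)]
  have hsumgam : (∑ e : ZMod (2*n), γ (Sum.inl e)) = (n : ℤ) := by
    rw [Finset.sum_congr rfl fun e _ => hgam e, Finset.sum_boole]
    have himg : Finset.univ.filter (fun e : ZMod (2*n) => ∃ j, D.head j = e)
        = Finset.univ.image D.head := by
      ext e
      simp [Finset.mem_image]
    rw [himg, Finset.card_image_of_injective _ hhinj, Finset.card_univ, Fintype.card_fin]
  have hsumlam : (∑ e : ZMod (2*n), lam D e)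
      = (2*n : ℤ) * (lam D 0 - γ (Sum.inl 0)) + n := by
    have hsplit : ∀ e : ZMod (2*n), lam D e
        = (lam D 0 - γ (Sum.inl 0)) + γ (Sum.inl e) := by
      intro e
      have := const e
      linarith
    rw [Finset.sum_congr rfl fun e _ => hsplit e, Finset.sum_add_distrib, hsumgam,
      Finset.sum_const, Finset.card_univ, ZMod.card]
    ring
  have hsumlam2 : (∑ e : ZMod (2*n), lam D e)
      = ∑ j : Fin n, ((D.tail j - D.head j).val : ℤ) := by
    rw [show (∑ e : ZMod (2*n), lam D e) = ∑ e : ZMod (2*n), ∑ j : Fin n,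
        (if inArc (D.head j) (D.tail j) e then (1:ℤ) else 0) from rfl, Finset.sum_comm]
    exact Finset.sum_congr rfl fun j _ => card_inArc _ _
  set A : ℤ := ((Finset.univ.filter fun j : Fin n =>
    (D.tail j - 1).val < (D.head j).val).card : ℤ) with hA
  have hsumBH : (∑ j : Fin n, (((D.tail j - 1).val : ℕ) : ℤ))
      = ∑ j : Fin n, (((D.head j).val : ℕ) : ℤ) := by
    have hinj2 : Function.Injective (fun j : Fin n => D.tail j - 1) := by
      intro a b hab
      apply htinj
      have : D.tail a - 1 + 1 = D.tail b - 1 + 1 := by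
        simp only at hab
        rw [hab]
      simpa using this
    have himg2 : Finset.univ.image (fun j : Fin n => D.tail j - 1)
        = Finset.univ.image D.head := by
      ext e
      simp only [Finset.mem_image, Finset.mem_univ, true_and]
      constructor
      · rintro ⟨j, hj⟩
        have hT : D.tail j = e + 1 := by rw [← hj]; ring
        exact (red_iff e).mp ((red_iff' e).mpr ⟨j, hT⟩)
      · rintro ⟨j, hj⟩
        obtain ⟨k, hk⟩ := (red_iff' e).mp ((red_iff e).mpr ⟨j, hj⟩)
        exact ⟨k, by rw [hk]; ring⟩
    have hsi := Finset.sum_image (s := (Finset.univ : Finset (Fin n)))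
      (f := fun e : ZMod (2*n) => ((e.val : ℕ) : ℤ))
      (g := fun j : Fin n => D.tail j - 1) (fun a _ b _ h => hinj2 h)
    have hsi2 := Finset.sum_image (s := (Finset.univ : Finset (Fin n)))
      (f := fun e : ZMod (2*n) => ((e.val : ℕ) : ℤ))
      (g := D.head) (fun a _ b _ h => hhinj h)
    rw [← hsi, himg2, hsi2]
  have hsum3 : (∑ j : Fin n, ((D.tail j - D.head j).val : ℤ)) = (2*n : ℤ) * A + n := by
    rw [Finset.sum_congr rfl fun j _ =>
      val_sub_split (D.head j) (D.tail j) (hth j j), Finset.sum_add_distrib]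
    have h4 : (∑ j : Fin n, if (D.tail j - 1).val < (D.head j).val
        then (2*n : ℤ) else 0) = (2*n : ℤ) * A := by
      rw [← Finset.sum_filter, Finset.sum_const, hA, nsmul_eq_mul]
      ring
    have h5 : (∑ j : Fin n, (1 + ((D.tail j - 1).val : ℤ) - ((D.head j).val : ℤ))) = n := by
      rw [Finset.sum_sub_distrib, Finset.sum_add_distrib, hsumBH, Finset.sum_const,
        Finset.card_univ, Fintype.card_fin]
      ring
    rw [h4, h5]
    ring
  have hCA : lam D 0 - γ (Sum.inl 0) = A := by
    have h6 : (2*n : ℤ) * (lam D 0 - γ (Sum.inl 0)) + n = (2*n : ℤ) * A + n := by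
      rw [← hsumlam, hsumlam2, hsum3]
    have hNne : (2*n : ℤ) ≠ 0 := by
      have := NeZero.ne n
      omega
    exact mul_left_cancel₀ hNne (by linarith)
  have hS : (({e' : ZMod (2 * n) |
      γ (Sum.inl e') = 1 ∧ e'.val < (nextEdge D γ e').val}.ncard : ℤ)) = A := by
    have hcard : (Finset.univ.filter fun j : Fin n =>
        (D.tail j - 1).val < (D.head j).val).card
        = (Finset.univ.filter fun e : ZMod (2*n) =>
            γ (Sum.inl e) = 1 ∧ e.val < (nextEdge D γ e).val).card := by
      apply Finset.card_bij (fun j _ => D.tail j - 1)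
      · intro j hj
        simp only [Finset.mem_filter, Finset.mem_univ, true_and] at hj ⊢
        have hT : D.tail j = (D.tail j - 1) + 1 := by ring
        refine ⟨(red_iff' _).mpr ⟨j, hT⟩, ?_⟩
        rw [hnext _ j hT]
        exact hj
      · intro a _ b _ hab
        apply htinj
        have : D.tail a - 1 + 1 = D.tail b - 1 + 1 := by rw [hab]
        simpa using this
      · intro e he
        simp only [Finset.mem_filter, Finset.mem_univ, true_and] at he
        obtain ⟨j, hj⟩ := (red_iff' e).mp he.1
        have hje : D.tail j - 1 = e := by rw [hj]; ring
        refine ⟨j, ?_, hje⟩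
        simp only [Finset.mem_filter, Finset.mem_univ, true_and]
        rw [hje]
        have := he.2
        rwa [hnext e j hj] at this
    rw [Set.ncard_eq_toFinset_card', Set.toFinset_setOf, hA, ← hcard]
  constructor
  · intro e he
    have hCe := const e
    rw [he] at hCe
    linarith [hS, hCA]
  · intro e he
    have hCe := const e
    rw [he] at hCe
    linarith [hS, hCA]
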